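/- Let d, m ≥ 1 and let N : Fin m → Matrix (Fin d) (Fin d) ℂ satisfy Σ_i N_iᴴ N_i ⊑ I in the Loewner order. Define ℰ(ρ) = Σ_i N_i ρ N_iᴴ. Then for every positive semidefinite d×d complex matrix ρ, the following are equivalent: (1) tr(ℰ^k(ρ)) → 0 as k → ∞; (2) the family of nonnegative reals k ↦ tr(ℰ^k(ρ)) is summable, i.e. Σ_{k=0}^∞ tr(ℰ^k(ρ)) < ∞. -/

import Mathlib

set_option maxHeartbeats 1000000
set_option synthInstance.maxHeartbeats 1000000

open Matrix Filter
open scoped ComplexOrder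

/-- The Loewner order: `A ⊑ B` iff `B - A` is positive semidefinite. -/
def loewner {d : ℕ} (A B : Matrix (Fin d) (Fin d) ℂ) : Prop := (B - A).PosSemidef

/-- The trace-nonincreasing completely positive map `ℰ(σ) = Σ_i N_i σ N_iᴴ`. -/
noncomputable def cpMap {d m : ℕ} (N : Fin m → Matrix (Fin d) (Fin d) ℂ)
    (σ : Matrix (Fin d) (Fin d) ℂ) : Matrix (Fin d) (Fin d) ℂ :=
  ∑ i, N i * σ * (N i)ᴴ

attribute [local instance] Matrix.normedAddCommGroup Matrix.normedSpace

@[reducible] noncomputable def matTopCP (d : ℕ) : TopologicalSpace (Matrix (Fin d) (Fin d) ℂ) :=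
  (Matrix.normedAddCommGroup (α := ℂ)).toUniformSpace.toTopologicalSpace

attribute [local instance] matTopCP

namespace CPaux

lemma diag_nn {d : ℕ} {A : Matrix (Fin d) (Fin d) ℂ} (hA : A.PosSemidef) (i : Fin d) :
    0 ≤ A i i := by
  have := hA.dotProduct_mulVec_nonneg (Pi.single i 1)
  simpa [dotProduct, mulVec, Pi.single_apply, Finset.sum_ite_eq] using this

lemma trace_nn {d : ℕ} {A : Matrix (Fin d) (Fin d) ℂ} (hA : A.PosSemidef) :
    0 ≤ A.trace :=
  Finset.sum_nonneg fun i _ => diag_nn hA i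

lemma diag_re_le_trace {d : ℕ} {A : Matrix (Fin d) (Fin d) ℂ} (hA : A.PosSemidef) (i : Fin d) :
    (A i i).re ≤ A.trace.re := by
  have h : A.trace.re = ∑ k, (A k k).re := by
    simp [Matrix.trace, Matrix.diag, Complex.re_sum]
  rw [h]
  exact Finset.single_le_sum (fun k _ => (Complex.le_def.mp (diag_nn hA k)).1) (Finset.mem_univ i)

lemma entry_norm_le_trace {d : ℕ} {A : Matrix (Fin d) (Fin d) ℂ} (hA : A.PosSemidef)
    (i j : Fin d) : ‖A i j‖ ≤ A.trace.re := by
  have htr : 0 ≤ A.trace.re := (Complex.le_def.mp (trace_nn hA)).1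
  rcases eq_or_ne i j with rfl | hij
  · have h0 := Complex.le_def.mp (diag_nn hA i)
    have him : (A i i).im = 0 := h0.2.symm
    have : A i i = ((A i i).re : ℂ) := Complex.ext rfl (by simp [him])
    rw [this]
    rw [Complex.norm_real, Real.norm_eq_abs, abs_of_nonneg h0.1]
    exact diag_re_le_trace hA i
  · rcases eq_or_ne (A i j) 0 with hc | hc
    · simp [hc, htr]
    · set c := A i j with hcdef
      set u : ℂ := (starRingEnd ℂ) c / ‖c‖ with hudef
      have hnc : (‖c‖ : ℂ) ≠ 0 := by
        simpa using norm_ne_zero_iff.mpr hc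
      have huc : u * c = (‖c‖ : ℂ) := by
        rw [hudef, div_mul_eq_mul_div, mul_comm, Complex.mul_conj, Complex.normSq_eq_norm_sq]
        push_cast
        rw [pow_two, mul_div_assoc, div_self hnc, mul_one]
      have huu : (starRingEnd ℂ) u * u = 1 := by
        have hnu : ‖u‖ = 1 := by
          simp [hudef, norm_div, hc, norm_ne_zero_iff]
        calc (starRingEnd ℂ) u * u = ((‖u‖ : ℂ))^2 := by
              rw [RCLike.conj_mul]; norm_cast
          _ = 1 := by rw [hnu]; norm_num
      have hji : A j i = (starRingEnd ℂ) c := by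
        conv_lhs => rw [← hA.1]
        simp [Matrix.conjTranspose_apply, hcdef]
      have hq : star (Pi.single i 1 + Pi.single j (-u)) ⬝ᵥ
            (A *ᵥ (Pi.single i 1 + Pi.single j (-u)))
          = A i i - u * A i j - (starRingEnd ℂ) u * A j i + ((starRingEnd ℂ) u * u) * A j j := by
        have h1 : A *ᵥ (Pi.single i 1 + Pi.single j (-u)) = fun a => A a i - A a j * u := by
          funext a
          simp [Matrix.mulVec_add, Matrix.mulVec_single, mul_comm, sub_eq_add_neg]
        rw [h1]
        have h2 : star (Pi.single i 1 + Pi.single j (-u)) =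
            ((Pi.single i (1:ℂ) + Pi.single j (-(starRingEnd ℂ) u)) : Fin d → ℂ) := by
          funext a
          rcases eq_or_ne a i with rfl|hai
          · simp [Pi.single_apply, Ne.symm hij]
          · rcases eq_or_ne a j with rfl|haj
            · simp [Pi.single_apply, hij, hai]
            · simp [Pi.single_apply, hai, haj]
        rw [h2, add_dotProduct, single_dotProduct, single_dotProduct]
        ring
      have h := hA.dotProduct_mulVec_nonneg (Pi.single i 1 + Pi.single j (-u))
      rw [hq] at h
      rw [← hcdef, hji, huu] at h
      have hcc : (starRingEnd ℂ) u * (starRingEnd ℂ) c = (‖c‖ : ℂ) := by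
        rw [← RingHom.map_mul, huc]
        simp
      rw [huc, hcc, one_mul] at h
      have hre := (Complex.le_def.mp h).1
      simp only [Complex.sub_re, Complex.add_re, Complex.ofReal_re, Complex.zero_re] at hre
      have h1 := diag_re_le_trace hA i
      have h2 := diag_re_le_trace hA j
      linarith

/-- `cpMap N` as a linear map. -/
noncomputable def cpL {d m : ℕ} (N : Fin m → Matrix (Fin d) (Fin d) ℂ) :
    Matrix (Fin d) (Fin d) ℂ →ₗ[ℂ] Matrix (Fin d) (Fin d) ℂ where
  toFun := cpMap N
  map_add' σ τ := by
    simp [cpMap, Matrix.mul_add, Matrix.add_mul, Finset.sum_add_distrib]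
  map_smul' a σ := by
    simp [cpMap, Matrix.mul_smul, Matrix.smul_mul, Finset.smul_sum]

@[simp] lemma cpL_apply {d m : ℕ} (N : Fin m → Matrix (Fin d) (Fin d) ℂ)
    (σ : Matrix (Fin d) (Fin d) ℂ) : cpL N σ = cpMap N σ := rfl

lemma cpMap_psd {d m : ℕ} (N : Fin m → Matrix (Fin d) (Fin d) ℂ)
    {σ : Matrix (Fin d) (Fin d) ℂ} (hσ : σ.PosSemidef) : (cpMap N σ).PosSemidef := by
  unfold cpMap
  refine Finset.sum_induction _ _ (fun a b ha hb => ha.add hb) Matrix.PosSemidef.zero ?_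
  exact fun i _ => hσ.mul_mul_conjTranspose_same (N i)

lemma iter_psd {d m : ℕ} (N : Fin m → Matrix (Fin d) (Fin d) ℂ)
    {ρ : Matrix (Fin d) (Fin d) ℂ} (hρ : ρ.PosSemidef) (k : ℕ) :
    ((cpMap N)^[k] ρ).PosSemidef := by
  induction k with
  | zero => simpa using hρ
  | succ n ih => rw [Function.iterate_succ_apply']; exact cpMap_psd N ih

lemma summable_half_pow_div (k0 : ℕ) (h : 0 < k0) :
    Summable (fun k : ℕ => ((1:ℝ)/2)^(k/k0)) := by
  apply summable_of_sum_range_le (c := 2*(k0:ℝ)) (fun n => by positivity)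
  intro n
  have hsub : Finset.range n ⊆ Finset.range (k0*n) :=
    Finset.range_subset_range.mpr (Nat.le_mul_of_pos_left n h)
  refine le_trans (Finset.sum_le_sum_of_subset_of_nonneg hsub (by intros; positivity)) ?_
  have heq : ∀ nn : ℕ, ∑ k ∈ Finset.range (k0*nn), ((1:ℝ)/2)^(k/k0)
      = ∑ q ∈ Finset.range nn, (k0:ℝ)*((1:ℝ)/2)^q := by
    intro nn
    induction nn with
    | zero => simp
    | succ n ih =>
        rw [Nat.mul_succ, Finset.sum_range_add, ih, Finset.sum_range_succ]
        congr 1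
        have hterm : ∀ i ∈ Finset.range k0, ((1:ℝ)/2)^((k0*n + i)/k0) = ((1:ℝ)/2)^n := by
          intro i hi
          rw [Finset.mem_range] at hi
          congr 1
          rw [add_comm, Nat.add_mul_div_left _ _ h, Nat.div_eq_of_lt hi, zero_add]
        rw [Finset.sum_congr rfl hterm, Finset.sum_const, Finset.card_range]
        simp [nsmul_eq_mul]
  rw [heq n, ← Finset.mul_sum]
  calc (k0:ℝ) * ∑ q ∈ Finset.range n, ((1:ℝ)/2)^q ≤ (k0:ℝ) * 2 :=
        mul_le_mul_of_nonneg_left (sum_geometric_two_le n) (by positivity)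
    _ = 2*(k0:ℝ) := by ring

end CPaux

open CPaux in
/-- For a trace-nonincreasing completely positive map `ℰ` on a finite-dimensional space
and a positive semidefinite `ρ`, `tr(ℰ^k(ρ)) → 0` iff `Σ_k tr(ℰ^k(ρ))` converges. -/
theorem trace_tendsto_zero_iff_summable
    (d m : ℕ) (hd : 1 ≤ d) (hm : 1 ≤ m)
    (N : Fin m → Matrix (Fin d) (Fin d) ℂ)
    (hN : loewner (∑ i, (N i)ᴴ * N i) 1)
    (ρ : Matrix (Fin d) (Fin d) ℂ) (hρ : ρ.PosSemidef) :
    Tendsto (fun k : ℕ => (((cpMap N)^[k] ρ).trace).re) atTop (nhds 0) ↔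
      Summable (fun k : ℕ => (((cpMap N)^[k] ρ).trace).re) := by
  set a : ℕ → ℝ := fun k => (((cpMap N)^[k] ρ).trace).re with ha
  constructor
  swap
  · exact fun h => h.tendsto_atTop_zero
  intro htend
  -- notation
  set ρk : ℕ → Matrix (Fin d) (Fin d) ℂ := fun k => (cpMap N)^[k] ρ with hρk
  have hpsd : ∀ k, (ρk k).PosSemidef := fun k => iter_psd N hρ k
  have hann : ∀ k, 0 ≤ a k := fun k => (Complex.le_def.mp (trace_nn (hpsd k))).1
  -- the iterates tend to 0 in norm
  have hbound : ∀ k, ‖ρk k‖ ≤ a k := fun k =>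
    (Matrix.norm_le_iff (hann k)).mpr fun i j => entry_norm_le_trace (hpsd k) i j
  have htend0 : Tendsto ρk atTop (nhds 0) := squeeze_zero_norm hbound htend
  -- the invariant subspace
  set El := cpL N with hEl
  set W : Submodule ℂ (Matrix (Fin d) (Fin d) ℂ) :=
    Submodule.span ℂ (Set.range ρk) with hWdef
  have hmemW : ∀ k, ρk k ∈ W := fun k => Submodule.subset_span ⟨k, rfl⟩
  have hWmap : ∀ x ∈ W, El x ∈ W := by
    intro x hx
    induction hx using Submodule.span_induction with
    | mem y hy =>
        obtain ⟨k, rfl⟩ := hy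
        have : El (ρk k) = ρk (k+1) := by
          simp only [hEl, cpL_apply, hρk]
          exact (Function.iterate_succ_apply' (cpMap N) k ρ).symm
        rw [this]; exact hmemW (k+1)
    | zero => simp only [map_zero]; exact W.zero_mem
    | add y z hy hz ihy ihz => rw [map_add]; exact W.add_mem ihy ihz
    | smul c y hy ih => rw [LinearMap.map_smul]; exact W.smul_mem c ih
  -- ambient pointwise convergence on W
  have hElpow : ∀ (n k : ℕ), (El ^ n) (ρk k) = ρk (n + k) := by
    intro n k
    rw [Module.End.pow_apply]
    show (cpMap N)^[n] ((cpMap N)^[k] ρ) = (cpMap N)^[n+k] ρ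
    rw [Function.iterate_add_apply]
  have key : ∀ x ∈ W, Tendsto (fun n : ℕ => (El ^ n) x) atTop (nhds 0) := by
    intro x hx
    induction hx using Submodule.span_induction with
    | mem y hy =>
        obtain ⟨k, rfl⟩ := hy
        have hfe : (fun n : ℕ => (El ^ n) (ρk k)) = fun n => ρk (n + k) := by
          funext n; exact hElpow n k
        rw [hfe]
        exact (tendsto_add_atTop_iff_nat k).mpr htend0
    | zero => simpa using tendsto_const_nhds
    | add y z hy hz ihy ihz => simpa [map_add] using ihy.add ihz
    | smul c y hy ih => simpa [LinearMap.map_smul] using ih.const_smul c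
  -- the restricted continuous linear map
  set f : W →ₗ[ℂ] W := El.restrict hWmap with hf
  set f' : W →L[ℂ] W := LinearMap.toContinuousLinearMap f with hf'
  have hcoe : ∀ (n : ℕ) (y : W), (((f' ^ n) y : W) : Matrix (Fin d) (Fin d) ℂ)
      = (El ^ n) (y : Matrix (Fin d) (Fin d) ℂ) := by
    intro n
    induction n with
    | zero => intro y; simp
    | succ n ih =>
        intro y
        rw [pow_succ, ContinuousLinearMap.mul_apply, ih, pow_succ, Module.End.mul_apply]
        all_goals rfl
  have keyW : ∀ x : W, Tendsto (fun n : ℕ => (f' ^ n) x) atTop (nhds 0) := by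
    intro x
    rw [Topology.IsEmbedding.subtypeVal.tendsto_nhds_iff]
    have : (Subtype.val ∘ fun n : ℕ => (f' ^ n) x)
        = fun n : ℕ => (El ^ n) (x : Matrix (Fin d) (Fin d) ℂ) := by
      funext n; exact hcoe n x
    rw [this]
    simpa using key x.1 x.2
  -- from pointwise to operator-norm convergence
  have hop : Tendsto (fun n : ℕ => f' ^ n) atTop (nhds 0) := by
    set b := Module.finBasis ℂ W with hb
    set Φ : (W →L[ℂ] W) →ₗ[ℂ] (Fin (Module.finrank ℂ W) → W) :=
      { toFun := fun T i => T (b i)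
        map_add' := by intro T S; funext i; simp
        map_smul' := by intro c T; funext i; simp } with hΦ
    have hinj : LinearMap.ker Φ = ⊥ := by
      rw [LinearMap.ker_eq_bot']
      intro T hT
      apply ContinuousLinearMap.coe_injective
      refine Module.Basis.ext b fun i => ?_
      have := congrFun hT i
      simpa [hΦ] using this
    have hemb := (LinearMap.isClosedEmbedding_of_injective (𝕜 := ℂ)
      (E := W →L[ℂ] W) (F := Fin (Module.finrank ℂ W) → W) (f := Φ) hinj).toIsEmbedding
    refine (hemb.tendsto_nhds_iff (f := fun n : ℕ => f' ^ n) (y := 0) (l := atTop)).mpr ?_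
    have hΦ0 : Φ 0 = 0 := map_zero Φ
    rw [hΦ0]
    rw [tendsto_pi_nhds]
    intro i
    simpa [hΦ] using keyW (b i)
  have hnrm : Tendsto (fun n : ℕ => ‖f' ^ n‖) atTop (nhds 0) := by
    have h : Tendsto (fun n : ℕ => ‖f' ^ n‖) atTop (nhds ‖(0 : W →L[ℂ] W)‖) :=
      Filter.Tendsto.norm (E := W →L[ℂ] W) (l := atTop) (f := fun n : ℕ => f' ^ n) (a := 0)
        (by exact hop)
    have h0 : ‖(0 : W →L[ℂ] W)‖ = 0 := ContinuousLinearMap.opNorm_zero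
    rwa [h0] at h
  obtain ⟨n₀, hn₀⟩ := eventually_atTop.mp
    (hnrm.eventually_lt_const (by norm_num : (0:ℝ) < 1/2))
  set k0 := n₀ + 1 with hk0def
  have hk0 : 0 < k0 := Nat.succ_pos _
  have hhalf : ‖f' ^ k0‖ ≤ 1/2 := le_of_lt (hn₀ k0 (Nat.le_succ _))
  -- the sequence in W
  set x : ℕ → W := fun k => ⟨ρk k, hmemW k⟩ with hx
  have hxnorm : ∀ k, ‖ρk k‖ = ‖x k‖ := fun k => rfl
  have hpow : ∀ (n k : ℕ), (f' ^ n) (x k) = x (k + n) := by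
    intro n k
    apply Subtype.ext
    rw [hcoe n (x k)]
    show (El ^ n) (ρk k) = ρk (k + n)
    rw [hElpow n k, Nat.add_comm]
  have hgeo : ∀ (j n : ℕ), ‖x (j + k0 * n)‖ ≤ ((1:ℝ)/2)^n * ‖x j‖ := by
    intro j n
    induction n with
    | zero => simp
    | succ n ih =>
        have hstep : x (j + k0 * (n+1)) = (f' ^ k0) (x (j + k0 * n)) := by
          rw [hpow]; congr 1; ring
        rw [hstep]
        calc ‖(f' ^ k0) (x (j + k0 * n))‖ ≤ ‖f' ^ k0‖ * ‖x (j + k0 * n)‖ :=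
              ContinuousLinearMap.le_opNorm _ _
          _ ≤ (1/2) * (((1:ℝ)/2)^n * ‖x j‖) := by
              apply mul_le_mul hhalf ih (norm_nonneg _) (by norm_num)
          _ = ((1:ℝ)/2)^(n+1) * ‖x j‖ := by ring
  set M : ℝ := ∑ j ∈ Finset.range k0, ‖x j‖ with hM
  have hMle : ∀ j, j < k0 → ‖x j‖ ≤ M := by
    intro j hj
    exact Finset.single_le_sum (f := fun j => ‖x j‖) (fun i _ => norm_nonneg _)
      (Finset.mem_range.mpr hj)
  have hMnn : 0 ≤ M := Finset.sum_nonneg fun i _ => norm_nonneg _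
  -- the final comparison
  have hfinal : ∀ k, a k ≤ ((d:ℝ) * M) * ((1:ℝ)/2)^(k / k0) := by
    intro k
    have h1 : a k ≤ (d:ℝ) * ‖ρk k‖ := by
      have : a k = ∑ i, ((ρk k) i i).re := by
        simp [ha, hρk, Matrix.trace, Matrix.diag, Complex.re_sum]
      rw [this]
      calc ∑ i, ((ρk k) i i).re ≤ ∑ i : Fin d, ‖ρk k‖ := by
            apply Finset.sum_le_sum
            intro i _
            exact le_trans (Complex.re_le_norm _)
              (le_trans (le_of_eq rfl)
                (Matrix.norm_entry_le_entrywise_sup_norm (ρk k)))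
        _ = (d:ℝ) * ‖ρk k‖ := by
            rw [Finset.sum_const, Finset.card_univ, Fintype.card_fin, nsmul_eq_mul]
    have h2 : ‖x k‖ ≤ ((1:ℝ)/2)^(k / k0) * M := by
      have hk : k = k % k0 + k0 * (k / k0) := (Nat.mod_add_div k k0).symm
      calc ‖x k‖ = ‖x (k % k0 + k0 * (k / k0))‖ := by rw [← hk]
        _ ≤ ((1:ℝ)/2)^(k / k0) * ‖x (k % k0)‖ := hgeo _ _
        _ ≤ ((1:ℝ)/2)^(k / k0) * M := by
            apply mul_le_mul_of_nonneg_left (hMle _ (Nat.mod_lt _ hk0)) (by positivity)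
    calc a k ≤ (d:ℝ) * ‖ρk k‖ := h1
      _ = (d:ℝ) * ‖x k‖ := by rw [hxnorm]
      _ ≤ (d:ℝ) * (((1:ℝ)/2)^(k / k0) * M) := by
          apply mul_le_mul_of_nonneg_left h2 (by positivity)
      _ = ((d:ℝ) * M) * ((1:ℝ)/2)^(k / k0) := by ring
  exact Summable.of_nonneg_of_le hann hfinal
    (((summable_half_pow_div k0 hk0)).mul_left ((d:ℝ) * M))
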